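/- (Proposition 2) For all x, z ∈ ℝ^n, the acceptance ratio of the low-rank independence sampler can be expressed as η(z, x) = exp(−(μ/2) Σ_{j=k+1}^n λ_j [ (v_jᵀ L z)² − (v_jᵀ L x)² ]). -/

import Mathlib

open Matrix MeasureTheory ProbabilityTheory Finset

noncomputable section

theorem stmt6
    (m n : ℕ) (hm : 0 < m) (hn : 0 < n)
    (A : Matrix (Fin m) (Fin n) ℝ) (L : Matrix (Fin n) (Fin n) ℝ) (hL : IsUnit L.det)
    (μ σ : ℝ) (hμ : 0 < μ) (hσ : 0 < σ)
    (v : Fin n → Fin n → ℝ) (lam : Fin n → ℝ)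
    (horth : ∀ i j, v i ⬝ᵥ v j = if i = j then (1 : ℝ) else 0)
    (hlam_nonneg : ∀ j, 0 ≤ lam j) (hlam_anti : Antitone lam)
    (hHdecomp : (L⁻¹)ᵀ * Aᵀ * A * L⁻¹ = ∑ j, lam j • vecMulVec (v j) (v j))
    (k : ℕ) (hk : k ≤ n)
    (Γcond : Matrix (Fin n) (Fin n) ℝ)
    (hΓcond : Γcond = (μ • (Aᵀ * A) + σ • (Lᵀ * L))⁻¹)
    (Γhat : Matrix (Fin n) (Fin n) ℝ)
    (hΓhat : Γhat = L⁻¹ * (σ • (1 : Matrix (Fin n) (Fin n) ℝ) +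
        μ • ∑ j ∈ Finset.univ.filter (fun j : Fin n => (j : ℕ) < k),
          lam j • vecMulVec (v j) (v j))⁻¹ * (L⁻¹)ᵀ)
    (w : (Fin n → ℝ) → ℝ)
    (hw : ∀ x, w x = Real.exp (-(1/2) * (x ⬝ᵥ ((Γcond⁻¹ - Γhat⁻¹) *ᵥ x))))
    (η : (Fin n → ℝ) → (Fin n → ℝ) → ℝ)
    (hη : ∀ z x, η z x = w z / w x)
    :
    ∀ x z : Fin n → ℝ,
      η z x = Real.exp (-(μ / 2) * ∑ j ∈ Finset.univ.filter (fun j : Fin n => k ≤ (j : ℕ)),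
        lam j * ((v j ⬝ᵥ (L *ᵥ z)) ^ 2 - (v j ⬝ᵥ (L *ᵥ x)) ^ 2)) := by
  classical
  -- abbreviations
  set S : Matrix (Fin n) (Fin n) ℝ := ∑ j, lam j • vecMulVec (v j) (v j) with hS
  set Sk : Matrix (Fin n) (Fin n) ℝ :=
    ∑ j ∈ Finset.univ.filter (fun j : Fin n => (j : ℕ) < k), lam j • vecMulVec (v j) (v j) with hSk
  set St : Matrix (Fin n) (Fin n) ℝ :=
    ∑ j ∈ Finset.univ.filter (fun j : Fin n => k ≤ (j : ℕ)), lam j • vecMulVec (v j) (v j) with hSt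
  have hsplit : S = Sk + St := by
    rw [hS, hSk, hSt]
    rw [← Finset.sum_filter_add_sum_filter_not Finset.univ (fun j : Fin n => (j : ℕ) < k)]
    congr 1
    apply Finset.sum_congr _ (fun _ _ => rfl)
    congr 1
    ext j
    simp [not_lt]
  have h2 : L⁻¹ * L = 1 := Matrix.nonsing_inv_mul _ hL
  have h2' : L * L⁻¹ = 1 := Matrix.mul_nonsing_inv _ hL
  have h1 : Lᵀ * (L⁻¹)ᵀ = 1 := by
    rw [← Matrix.transpose_mul, h2, Matrix.transpose_one]
  have dps : ∀ {p : ℕ} (y : Fin p → ℝ), 0 ≤ y ⬝ᵥ y := fun y => Finset.sum_nonneg fun i _ => mul_self_nonneg _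
  have dpp : ∀ y : Fin n → ℝ, y ≠ 0 → 0 < y ⬝ᵥ y := fun y hy => by
    simpa using dotProduct_self_star_pos_iff.mpr hy
  -- single quadratic form
  have quad1 : ∀ (u y : Fin n → ℝ), y ⬝ᵥ (vecMulVec u u *ᵥ y) = (u ⬝ᵥ y) ^ 2 := by
    intro u y
    simp only [dotProduct, mulVec, vecMulVec_apply, Finset.mul_sum, sq]
    refine Finset.sum_congr rfl fun i _ => ?_
    rw [Finset.sum_mul]
    refine Finset.sum_congr rfl fun j _ => ?_
    ring
  -- quadratic form of sums
  have key : ∀ (t : Finset (Fin n)) (y : Fin n → ℝ),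
      y ⬝ᵥ ((∑ j ∈ t, lam j • vecMulVec (v j) (v j)) *ᵥ y)
        = ∑ j ∈ t, lam j * (v j ⬝ᵥ y) ^ 2 := by
    intro t y
    induction t using Finset.induction_on with
    | empty => simp
    | insert a s h ih =>
        rw [Finset.sum_insert h, Finset.sum_insert h, Matrix.add_mulVec, dotProduct_add, ih,
          Matrix.smul_mulVec, dotProduct_smul, quad1]
        simp [smul_eq_mul]
  -- symmetry of vecMulVec v v
  have hvsymm : ∀ u : Fin n → ℝ, (vecMulVec u u)ᵀ = vecMulVec u u := by
    intro u; ext i j; simp [vecMulVec_apply, mul_comm]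
  -- A^T A = L^T S L
  have hAA : Aᵀ * A = Lᵀ * S * L := by
    have := congrArg (fun M => Lᵀ * M * L) hHdecomp
    rw [← this]
    simp only [← Matrix.mul_assoc]
    rw [h1, Matrix.one_mul, Matrix.mul_assoc (Aᵀ * A) L⁻¹ L, h2, Matrix.mul_one]
  -- B := σ•1 + μ•Sk is positive definite
  set B : Matrix (Fin n) (Fin n) ℝ := σ • (1 : Matrix (Fin n) (Fin n) ℝ) + μ • Sk with hB
  have hB_herm : B.IsHermitian := by
    rw [Matrix.IsHermitian, conjTranspose_eq_transpose_of_trivial, hB, Matrix.transpose_add,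
      Matrix.transpose_smul, Matrix.transpose_smul, Matrix.transpose_one, hSk,
      Matrix.transpose_sum]
    congr 1
    congr 1
    apply Finset.sum_congr rfl
    intro j _
    rw [Matrix.transpose_smul, hvsymm]
  have hB_pd : B.PosDef := by
    refine Matrix.posDef_iff_dotProduct_mulVec.mpr ⟨hB_herm, fun x hx => ?_⟩
    have hxx : 0 < x ⬝ᵥ x := dpp x hx
    have : (star x) ⬝ᵥ (B *ᵥ x) = σ * (x ⬝ᵥ x)
        + μ * ∑ j ∈ Finset.univ.filter (fun j : Fin n => (j : ℕ) < k),
            lam j * (v j ⬝ᵥ x) ^ 2 := by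
      rw [hB, Matrix.add_mulVec, dotProduct_add, Matrix.smul_mulVec,
        Matrix.smul_mulVec, dotProduct_smul, dotProduct_smul, Matrix.one_mulVec]
      simp only [star_trivial, smul_eq_mul, hSk, key]
    rw [this]
    have hsum : 0 ≤ ∑ j ∈ Finset.univ.filter (fun j : Fin n => (j : ℕ) < k),
        lam j * (v j ⬝ᵥ x) ^ 2 :=
      Finset.sum_nonneg fun j _ => mul_nonneg (hlam_nonneg j) (sq_nonneg _)
    positivity
  -- M := μ•(AᵀA)+σ•(LᵀL) is positive definite
  set M : Matrix (Fin n) (Fin n) ℝ := μ • (Aᵀ * A) + σ • (Lᵀ * L) with hM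
  have hLunit : IsUnit L := (Matrix.isUnit_iff_isUnit_det L).mpr hL
  have hLinj : Function.Injective (fun y => L *ᵥ y) :=
    Matrix.mulVec_injective_iff_isUnit.mpr hLunit
  have hM_pd : M.PosDef := by
    refine Matrix.posDef_iff_dotProduct_mulVec.mpr ⟨?_, ?_⟩
    · rw [Matrix.IsHermitian, conjTranspose_eq_transpose_of_trivial, hM, Matrix.transpose_add,
        Matrix.transpose_smul, Matrix.transpose_smul, Matrix.transpose_mul, Matrix.transpose_mul,
        Matrix.transpose_transpose, Matrix.transpose_transpose]
    · intro x hx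
      have hLx : L *ᵥ x ≠ 0 := by
        intro h
        exact hx (hLinj (by simpa [Matrix.mulVec_zero] using h : (fun y => L *ᵥ y) x = (fun y => L *ᵥ y) 0))
      have hLxx : 0 < (L *ᵥ x) ⬝ᵥ (L *ᵥ x) := dpp _ hLx
      have hqA : x ⬝ᵥ ((Aᵀ * A) *ᵥ x) = (A *ᵥ x) ⬝ᵥ (A *ᵥ x) := by
        rw [← Matrix.mulVec_mulVec, Matrix.dotProduct_mulVec, Matrix.vecMul_transpose]
      have hqL : x ⬝ᵥ ((Lᵀ * L) *ᵥ x) = (L *ᵥ x) ⬝ᵥ (L *ᵥ x) := by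
        rw [← Matrix.mulVec_mulVec, Matrix.dotProduct_mulVec, Matrix.vecMul_transpose]
      have : (star x) ⬝ᵥ (M *ᵥ x)
          = μ * ((A *ᵥ x) ⬝ᵥ (A *ᵥ x)) + σ * ((L *ᵥ x) ⬝ᵥ (L *ᵥ x)) := by
        rw [hM, Matrix.add_mulVec, dotProduct_add, Matrix.smul_mulVec,
          Matrix.smul_mulVec, dotProduct_smul, dotProduct_smul]
        simp only [star_trivial, smul_eq_mul, hqA, hqL]
      rw [this]
      have hA0 : 0 ≤ (A *ᵥ x) ⬝ᵥ (A *ᵥ x) := dps _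
      positivity
  have hMdet : IsUnit M.det := hM_pd.det_pos.ne'.isUnit
  have hBdet : IsUnit B.det := hB_pd.det_pos.ne'.isUnit
  have hΓci : Γcond⁻¹ = M := by
    rw [hΓcond, Matrix.nonsing_inv_nonsing_inv _ hMdet]
  have hΓhi : Γhat⁻¹ = Lᵀ * B * L := by
    rw [hΓhat, Matrix.mul_inv_rev, Matrix.mul_inv_rev,
      Matrix.nonsing_inv_nonsing_inv _ hBdet, Matrix.nonsing_inv_nonsing_inv _ hL,
      Matrix.transpose_nonsing_inv,
      Matrix.nonsing_inv_nonsing_inv _ (by rwa [Matrix.det_transpose]), Matrix.mul_assoc]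
  have hdiff : Γcond⁻¹ - Γhat⁻¹ = μ • (Lᵀ * St * L) := by
    rw [hΓci, hΓhi, hM, hAA, hsplit, hB]
    simp only [Matrix.mul_add, Matrix.add_mul, Matrix.mul_smul, Matrix.smul_mul,
      Matrix.mul_one, Matrix.one_mul, smul_add]
    abel
  have hquad : ∀ y : Fin n → ℝ, y ⬝ᵥ ((Γcond⁻¹ - Γhat⁻¹) *ᵥ y)
      = μ * ∑ j ∈ Finset.univ.filter (fun j : Fin n => k ≤ (j : ℕ)),
          lam j * (v j ⬝ᵥ (L *ᵥ y)) ^ 2 := by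
    intro y
    rw [hdiff, Matrix.smul_mulVec, dotProduct_smul, smul_eq_mul]
    congr 1
    rw [Matrix.mul_assoc, ← Matrix.mulVec_mulVec, ← Matrix.mulVec_mulVec,
      Matrix.dotProduct_mulVec, Matrix.vecMul_transpose, hSt, key]
  intro x z
  rw [hη, hw, hw, ← Real.exp_sub]
  congr 1
  rw [hquad z, hquad x]
  simp only [mul_sub, Finset.sum_sub_distrib]
  ring
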